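/- Fix α, β > −1 and let π(x) = x^α (1 − x)^β / B(α+1, β+1) for x ∈ (0, 1) (the Beta density), and let the variance function be σ²(x)/2 = x(1 − x). Then the average variance is σ̂²/2 = ∫₀¹ x(1 − x) π(x) dx = (α+1)(β+1)/((α+β+2)(α+β+3)), the variance of π is m₂ − m₁² = (α+1)(β+1)/((α+β+2)²(α+β+3)), and hence the ratio σ̂²/(2(m₂ − m₁²)) = α + β + 2, which equals the smallest nonzero eigenvalue λ₁ = 1·(1 + α + β + 1) of the hypergeometric (Jacobi-type) diffusion; thus this Pearson diffusion attains the optimal convergence rate. -/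

import Mathlib

open MeasureTheory Set

lemma betaReal (a b : ℝ) (ha : 0 < a) (hb : 0 < b) :
    ∫ x in Set.Ioo (0 : ℝ) 1, x ^ (a - 1) * (1 - x) ^ (b - 1)
      = Real.Gamma a * Real.Gamma b / Real.Gamma (a + b) := by
  have hab : 0 < a + b := add_pos ha hb
  have hG : Real.Gamma (a + b) ≠ 0 := (Real.Gamma_pos_of_pos hab).ne'
  have key := Complex.Gamma_mul_Gamma_eq_betaIntegral
    (s := (a : ℂ)) (t := (b : ℂ)) (by simpa using ha) (by simpa using hb)
  have hcast : Complex.betaIntegral (a : ℂ) (b : ℂ)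
      = ((∫ x in Set.Ioo (0 : ℝ) 1, x ^ (a - 1) * (1 - x) ^ (b - 1) : ℝ) : ℂ) := by
    calc Complex.betaIntegral (a : ℂ) (b : ℂ)
        = ∫ x in Set.Ioo (0 : ℝ) 1,
            ((x ^ (a - 1) * (1 - x) ^ (b - 1) : ℝ) : ℂ) := by
          rw [Complex.betaIntegral, intervalIntegral.integral_of_le zero_le_one,
            MeasureTheory.integral_Ioc_eq_integral_Ioo]
          refine setIntegral_congr_fun measurableSet_Ioo (fun x hx => ?_)
          have h1 : (0:ℝ) ≤ x := le_of_lt hx.1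
          have h2 : (0:ℝ) ≤ 1 - x := by linarith [hx.2]
          push_cast
          rw [Complex.ofReal_cpow h1, Complex.ofReal_cpow h2]
          push_cast
          ring
      _ = _ := integral_ofReal
  rw [hcast] at key
  have : ((Real.Gamma a * Real.Gamma b : ℝ) : ℂ)
      = ((Real.Gamma (a + b) * ∫ x in Set.Ioo (0 : ℝ) 1,
          x ^ (a - 1) * (1 - x) ^ (b - 1) : ℝ) : ℂ) := by
    push_cast
    rw [← Complex.Gamma_ofReal, ← Complex.Gamma_ofReal, ← Complex.Gamma_ofReal]
    push_cast
    exact key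
  have hr := Complex.ofReal_injective this
  field_simp
  linarith [hr]

theorem statement11
    (α β : ℝ) (hα : -1 < α) (hβ : -1 < β)
    (B : ℝ → ℝ → ℝ)
    (hB : ∀ a b, B a b = Real.Gamma a * Real.Gamma b / Real.Gamma (a + b))
    (ρ : ℝ → ℝ)
    (hρ : ∀ x, ρ x = x ^ α * (1 - x) ^ β / B (α + 1) (β + 1)) :
    (∫ x in Set.Ioo (0 : ℝ) 1, x * (1 - x) * ρ x)
        = (α + 1) * (β + 1) / ((α + β + 2) * (α + β + 3)) ∧
    (∫ x in Set.Ioo (0 : ℝ) 1, x ^ 2 * ρ x) - (∫ x in Set.Ioo (0 : ℝ) 1, x * ρ x) ^ 2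
        = (α + 1) * (β + 1) / ((α + β + 2) ^ 2 * (α + β + 3)) ∧
    (∫ x in Set.Ioo (0 : ℝ) 1, x * (1 - x) * ρ x) /
        ((∫ x in Set.Ioo (0 : ℝ) 1, x ^ 2 * ρ x) - (∫ x in Set.Ioo (0 : ℝ) 1, x * ρ x) ^ 2)
        = 1 * (1 + α + β + 1) := by
  have ha1 : (0:ℝ) < α + 1 := by linarith
  have hb1 : (0:ℝ) < β + 1 := by linarith
  set Ga := Real.Gamma (α + 1) with hGa
  set Gb := Real.Gamma (β + 1) with hGb
  set Gs := Real.Gamma (α + β + 2) with hGs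
  have hGap : 0 < Ga := Real.Gamma_pos_of_pos ha1
  have hGbp : 0 < Gb := Real.Gamma_pos_of_pos hb1
  have hGsp : 0 < Gs := Real.Gamma_pos_of_pos (by linarith)
  have hBval : B (α + 1) (β + 1) = Ga * Gb / Gs := by
    rw [hB, show α + 1 + (β + 1) = α + β + 2 by ring]
  have hBpos : 0 < B (α + 1) (β + 1) := by
    rw [hBval]; positivity
  -- Gamma recurrences
  have hrec : ∀ x : ℝ, 0 < x → Real.Gamma (x + 1) = x * Real.Gamma x := fun x hx =>
    Real.Gamma_add_one hx.ne'
  have hGa2 : Real.Gamma (α + 2) = (α + 1) * Ga := by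
    have := hrec (α + 1) ha1; rw [show α + 2 = α + 1 + 1 by ring, this, hGa]
  have hGa3 : Real.Gamma (α + 3) = (α + 2) * ((α + 1) * Ga) := by
    have := hrec (α + 2) (by linarith); rw [show α + 3 = α + 2 + 1 by ring, this, hGa2]
  have hGb2 : Real.Gamma (β + 2) = (β + 1) * Gb := by
    have := hrec (β + 1) hb1; rw [show β + 2 = β + 1 + 1 by ring, this, hGb]
  have hGs3 : Real.Gamma (α + β + 3) = (α + β + 2) * Gs := by
    have := hrec (α + β + 2) (by linarith)
    rw [show α + β + 3 = α + β + 2 + 1 by ring, this, hGs]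
  have hGs4 : Real.Gamma (α + β + 4) = (α + β + 3) * ((α + β + 2) * Gs) := by
    have := hrec (α + β + 3) (by linarith)
    rw [show α + β + 4 = α + β + 3 + 1 by ring, this, hGs3]
  -- generic moment computation
  have moment : ∀ a b : ℝ, 0 < a → 0 < b →
      ∀ f : ℝ → ℝ, (∀ x, 0 < x → x < 1 → f x = x ^ (a - 1) * (1 - x) ^ (b - 1)) →
      (∫ x in Set.Ioo (0 : ℝ) 1, f x / B (α + 1) (β + 1))
        = (Real.Gamma a * Real.Gamma b / Real.Gamma (a + b)) / B (α + 1) (β + 1) := by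
    intro a b ha hb f hf
    rw [← betaReal a b ha hb, integral_div]
    congr 1
    exact setIntegral_congr_fun measurableSet_Ioo (fun x hx => by rw [hf x hx.1 hx.2])
  have rp : ∀ (x c : ℝ), 0 < x → x ^ (c + 1) = x ^ c * x := fun x c hx => by
    rw [Real.rpow_add hx, Real.rpow_one]
  -- three moments
  have M11 : (∫ x in Set.Ioo (0 : ℝ) 1, x * (1 - x) * ρ x)
      = (Real.Gamma (α + 2) * Real.Gamma (β + 2) / Real.Gamma (α + β + 4))
          / B (α + 1) (β + 1) := by
    have key := moment (α + 2) (β + 2) (by linarith) (by linarith)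
      (fun x => x * (1 - x) * (x ^ α * (1 - x) ^ β)) (fun x hx1 hx2 => by
        have h2 : (0:ℝ) < 1 - x := by linarith
        rw [show α + 2 - 1 = α + 1 by ring, show β + 2 - 1 = β + 1 by ring,
          rp x α hx1, rp (1 - x) β h2]
        ring)
    rw [show (α + 2) + (β + 2) = α + β + 4 by ring] at key
    rw [← key]
    exact setIntegral_congr_fun measurableSet_Ioo (fun x _ => by rw [hρ]; ring)
  have M2 : (∫ x in Set.Ioo (0 : ℝ) 1, x ^ 2 * ρ x)
      = (Real.Gamma (α + 3) * Real.Gamma (β + 1) / Real.Gamma (α + β + 4))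
          / B (α + 1) (β + 1) := by
    have key := moment (α + 3) (β + 1) (by linarith) hb1
      (fun x => x ^ 2 * (x ^ α * (1 - x) ^ β)) (fun x hx1 hx2 => by
        rw [show α + 3 - 1 = (α + 1) + 1 by ring, show β + 1 - 1 = β by ring,
          rp x (α + 1) hx1, rp x α hx1]
        ring)
    rw [show (α + 3) + (β + 1) = α + β + 4 by ring] at key
    rw [← key]
    exact setIntegral_congr_fun measurableSet_Ioo (fun x _ => by rw [hρ]; ring)
  have M1 : (∫ x in Set.Ioo (0 : ℝ) 1, x * ρ x)
      = (Real.Gamma (α + 2) * Real.Gamma (β + 1) / Real.Gamma (α + β + 3))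
          / B (α + 1) (β + 1) := by
    have key := moment (α + 2) (β + 1) (by linarith) hb1
      (fun x => x * (x ^ α * (1 - x) ^ β)) (fun x hx1 hx2 => by
        rw [show α + 2 - 1 = α + 1 by ring, show β + 1 - 1 = β by ring, rp x α hx1]
        ring)
    rw [show (α + 2) + (β + 1) = α + β + 3 by ring] at key
    rw [← key]
    exact setIntegral_congr_fun measurableSet_Ioo (fun x _ => by rw [hρ]; ring)
  rw [M11, M2, M1, hBval, hGa2, hGa3, hGb2, hGs3, hGs4]
  have h2 : (0:ℝ) < α + β + 2 := by linarith
  have h3 : (0:ℝ) < α + β + 3 := by linarith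
  have e1 : ((α + 1) * Ga * ((β + 1) * Gb) / ((α + β + 3) * ((α + β + 2) * Gs)))
      / (Ga * Gb / Gs) = (α + 1) * (β + 1) / ((α + β + 2) * (α + β + 3)) := by
    field_simp
  have e2 : ((α + 2) * ((α + 1) * Ga) * Gb / ((α + β + 3) * ((α + β + 2) * Gs)))
      / (Ga * Gb / Gs) = (α + 2) * (α + 1) / ((α + β + 2) * (α + β + 3)) := by
    field_simp
  have e3 : ((α + 1) * Ga * Gb / ((α + β + 2) * Gs)) / (Ga * Gb / Gs)
      = (α + 1) / (α + β + 2) := by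
    field_simp
  rw [e1, e2, e3]
  have evar : (α + 2) * (α + 1) / ((α + β + 2) * (α + β + 3))
      - ((α + 1) / (α + β + 2)) ^ 2
      = (α + 1) * (β + 1) / ((α + β + 2) ^ 2 * (α + β + 3)) := by
    field_simp
    ring
  refine ⟨rfl, evar, ?_⟩
  rw [evar]
  have hne : (α + 1) * (β + 1) ≠ 0 := by positivity
  field_simp
  ring
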